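/- arXiv:1808.05568 — 3 statements merged into one kernel-verified Lean document; each statement's English description precedes it below -/
import Mathlib

section
/- Let ε ∈ {1,−1}, let u, v : ℝ → ℂ satisfy ε|u(x)|² + |v(x)|² = 1 for all x, let c : ℝ → ℝ, and set J′ = diag(1, −2, 1), g(x) = (1/√2)·[[1, 0, −1], [εu(x)*, √2·v(x), εu(x)*], [v(x)*, −√2·u(x), v(x)*]] and ψ₀(x) = exp(−i·c(x)·J′)·g(x)⁻¹. Then for all x: K·ψ₀(x) = ψ₀(x)·H and ψ₀(x)⁻¹·K = H·ψ₀(x)⁻¹, where K is the 3×3 matrix with 1's on the antidiagonal and 0 elsewhere and H = diag(−1, 1, 1). -/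
open Matrix Complex

noncomputable section

theorem psi0_K_symmetry (ε : ℝ) (hε : ε = 1 ∨ ε = -1) (u v : ℝ → ℂ)
    (huv : ∀ x, ε * Complex.normSq (u x) + Complex.normSq (v x) = 1)
    (c : ℝ → ℝ) :
    let J' : Matrix (Fin 3) (Fin 3) ℂ := Matrix.diagonal ![1, -2, 1]
    let g : ℝ → Matrix (Fin 3) (Fin 3) ℂ := fun x =>
      ((Real.sqrt 2 : ℂ))⁻¹ •
        !![1, 0, -1;
           (ε : ℂ) * (starRingEnd ℂ) (u x), (Real.sqrt 2 : ℂ) * v x,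
             (ε : ℂ) * (starRingEnd ℂ) (u x);
           (starRingEnd ℂ) (v x), -(Real.sqrt 2 : ℂ) * u x, (starRingEnd ℂ) (v x)]
    let ψ₀ : ℝ → Matrix (Fin 3) (Fin 3) ℂ := fun x =>
      NormedSpace.exp ((-(Complex.I * (c x : ℂ))) • J') * (g x)⁻¹
    let K : Matrix (Fin 3) (Fin 3) ℂ := !![0, 0, 1; 0, 1, 0; 1, 0, 0]
    let H : Matrix (Fin 3) (Fin 3) ℂ := Matrix.diagonal ![-1, 1, 1]
    ∀ x, K * ψ₀ x = ψ₀ x * H ∧ (ψ₀ x)⁻¹ * K = H * (ψ₀ x)⁻¹ := by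
  intro J' g ψ₀ K H x
  have h2 : (Real.sqrt 2 : ℂ) ≠ 0 := by
    norm_cast
    positivity
  -- determinant of g x
  have hdet : (g x).det = 1 := by
    have h := huv x
    have hε2 : ((ε:ℂ)) * ((starRingEnd ℂ) (u x) * u x) + (starRingEnd ℂ) (v x) * v x = 1 := by
      rw [mul_comm ((starRingEnd ℂ) (u x)), mul_comm ((starRingEnd ℂ) (v x)),
        Complex.mul_conj, Complex.mul_conj]
      norm_cast
    simp only [g, det_smul, det_fin_three, Fintype.card_fin]
    have hs2 : ((Real.sqrt 2 : ℝ) : ℂ)^2 = 2 := by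
      norm_cast
      rw [Real.sq_sqrt] <;> norm_num
    norm_num [Matrix.cons_val', Matrix.cons_val_zero, Matrix.cons_val_one, Matrix.cons_val_two, Matrix.vecHead, Matrix.vecTail]
    field_simp
    linear_combination 2 * hε2 - hs2
  have hdu : IsUnit (g x).det := by rw [hdet]; exact isUnit_one
  have hgK : g x * K = H * g x := by
    ext i j
    fin_cases i <;> fin_cases j <;>
      simp [g, K, H, Matrix.mul_apply, Fin.sum_univ_succ, Matrix.diagonal] <;> ring
  have hKg : K * (g x)⁻¹ = (g x)⁻¹ * H := by
    calc K * (g x)⁻¹ = (g x)⁻¹ * (g x * K) * (g x)⁻¹ := by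
          rw [← Matrix.mul_assoc, Matrix.nonsing_inv_mul _ hdu, Matrix.one_mul]
      _ = (g x)⁻¹ * H * (g x * (g x)⁻¹) := by rw [hgK]; noncomm_ring
      _ = (g x)⁻¹ * H := by rw [Matrix.mul_nonsing_inv _ hdu, Matrix.mul_one]
  set E := NormedSpace.exp ((-(Complex.I * (c x : ℂ))) • J') with hE
  have hKJ : Commute K J' := by
    show K * J' = J' * K
    ext i j
    fin_cases i <;> fin_cases j <;>
      simp [K, J', Matrix.mul_apply, Fin.sum_univ_succ, Matrix.diagonal, Matrix.vecHead, Matrix.vecTail]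
  have hKE : Commute K E := (hKJ.smul_right _).exp_right
  have h1 : K * ψ₀ x = ψ₀ x * H := by
    show K * (E * (g x)⁻¹) = E * (g x)⁻¹ * H
    rw [← Matrix.mul_assoc, hKE.eq, Matrix.mul_assoc, hKg, Matrix.mul_assoc]
  refine ⟨h1, ?_⟩
  set ψ := ψ₀ x with hψ
  have hψdet : IsUnit ψ.det := by
    have hEu : IsUnit E.det := (Matrix.isUnit_iff_isUnit_det _).1 (Matrix.isUnit_exp _)
    show IsUnit (E * (g x)⁻¹).det
    rw [Matrix.det_mul, Matrix.det_nonsing_inv]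
    exact hEu.mul (by simpa using hdu)
  have hinv1 : ψ * ψ⁻¹ = 1 := Matrix.mul_nonsing_inv _ hψdet
  have hinv2 : ψ⁻¹ * ψ = 1 := Matrix.nonsing_inv_mul _ hψdet
  have h3 : ψ⁻¹ * (K * ψ) = H := by rw [h1, ← Matrix.mul_assoc, hinv2, Matrix.one_mul]
  calc ψ⁻¹ * K = ψ⁻¹ * K * (ψ * ψ⁻¹) := by rw [hinv1, Matrix.mul_one]
    _ = ψ⁻¹ * (K * ψ) * ψ⁻¹ := by simp only [Matrix.mul_assoc]
    _ = H * ψ⁻¹ := by rw [h3]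
end
end

section
/- Let ε ∈ {1,−1} and let S : ℝ → Mat(3,ℂ) satisfy Q_ε·S(x)†·Q_ε = S(x) for all x. Suppose ψ : ℝ × ℂ → Mat(3,ℂ) is such that for every μ ∈ ℂ the function x ↦ ψ(x,μ) is differentiable, ψ(x,μ) is invertible for all x, and i·∂ₓψ(x,μ) = μ·S(x)·ψ(x,μ). Fix λ ∈ ℂ and define φ(x) := (Q_ε · ψ(x, λ*)† · Q_ε)⁻¹. Then φ is differentiable and i·φ′(x) = λ·S(x)·φ(x); i.e., the reduction g₁ maps solutions of the pole-gauge linear problem at λ* to solutions at λ. -/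
open Matrix Complex

noncomputable section

theorem reduction_g1_maps_solutions (ε : ℝ) (hε : ε = 1 ∨ ε = -1)
    (S : ℝ → Matrix (Fin 3) (Fin 3) ℂ)
    (hS : ∀ x, (Matrix.diagonal ![1, (ε : ℂ), 1]) * (S x)ᴴ * (Matrix.diagonal ![1, (ε : ℂ), 1])
      = S x)
    (ψ ψx : ℝ → ℂ → Matrix (Fin 3) (Fin 3) ℂ)
    (hinv : ∀ x μ, IsUnit (ψ x μ))
    (hd : ∀ (μ : ℂ) (x : ℝ) (i j : Fin 3), HasDerivAt (fun t => ψ t μ i j) (ψx x μ i j) x)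
    (heq : ∀ (μ : ℂ) (x : ℝ), Complex.I • ψx x μ = μ • (S x * ψ x μ))
    (lam : ℂ) :
    let Qε : Matrix (Fin 3) (Fin 3) ℂ := Matrix.diagonal ![1, (ε : ℂ), 1]
    let φ : ℝ → Matrix (Fin 3) (Fin 3) ℂ := fun x =>
      (Qε * (ψ x ((starRingEnd ℂ) lam))ᴴ * Qε)⁻¹
    ∃ φ' : ℝ → Matrix (Fin 3) (Fin 3) ℂ,
      (∀ x i j, HasDerivAt (fun t => φ t i j) (φ' x i j) x) ∧
      ∀ x, Complex.I • φ' x = lam • (S x * φ x) := by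
  intro Qε φ
  set c : ℂ := (starRingEnd ℂ) lam with hc
  set d : Fin 3 → ℂ := ![1, (ε : ℂ), 1] with hdd
  set A : ℝ → Matrix (Fin 3) (Fin 3) ℂ := fun t => Qε * (ψ t c)ᴴ * Qε with hA_def
  set A' : ℝ → Matrix (Fin 3) (Fin 3) ℂ := fun t => Qε * (ψx t c)ᴴ * Qε with hA'_def
  -- Qε * Qε = 1
  have hQ2 : Qε * Qε = 1 := by
    show Matrix.diagonal d * Matrix.diagonal d = 1
    rw [Matrix.diagonal_mul_diagonal]
    have hdd1 : (fun i => d i * d i) = (1 : Fin 3 → ℂ) := by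
      funext i
      fin_cases i <;> rcases hε with h | h <;> simp [hdd, h] <;> norm_num
    rw [hdd1]
    exact Matrix.diagonal_one
  -- A is a unit
  have hQunit : IsUnit Qε := ⟨⟨Qε, Qε, hQ2, hQ2⟩, rfl⟩
  have hAunit : ∀ t, IsUnit (A t) := by
    intro t
    have h1 : IsUnit ((ψ t c)ᴴ) := by
      rw [Matrix.isUnit_iff_isUnit_det, Matrix.det_conjTranspose]
      exact (((hinv t c).map Matrix.detMonoidHom)).star
    exact (hQunit.mul h1).mul hQunit
  have hAdet : ∀ t, IsUnit (A t).det := fun t =>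
    (Matrix.isUnit_iff_isUnit_det _).mp (hAunit t)
  have hφA : ∀ t, φ t * A t = 1 := fun t => Matrix.nonsing_inv_mul _ (hAdet t)
  have hAφ : ∀ t, A t * φ t = 1 := fun t => Matrix.mul_nonsing_inv _ (hAdet t)
  -- entry formula for Qε * Mᴴ * Qε
  have hQMQ : ∀ (M : Matrix (Fin 3) (Fin 3) ℂ) (i j : Fin 3),
      (Qε * Mᴴ * Qε) i j = d i * star (M j i) * d j := by
    intro M i j
    show (Matrix.diagonal d * Mᴴ * Matrix.diagonal d) i j = _
    rw [Matrix.mul_diagonal, Matrix.diagonal_mul, Matrix.conjTranspose_apply]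
  -- entrywise derivative of A
  have hA : ∀ (x : ℝ) (i j : Fin 3), HasDerivAt (fun t => A t i j) (A' x i j) x := by
    intro x i j
    have h1 : HasDerivAt (fun t => d i * star (ψ t c j i) * d j)
        (d i * star (ψx x c j i) * d j) x :=
      (((hd c x j i).star).const_mul (d i)).mul_const (d j)
    have h2 : (fun t => A t i j) = fun t => d i * star (ψ t c j i) * d j := by
      funext t; exact hQMQ _ i j
    have h3 : A' x i j = d i * star (ψx x c j i) * d j := hQMQ _ i j
    rw [h2, h3]
    exact h1
  have hAdiff : ∀ (x : ℝ) (i j : Fin 3), DifferentiableAt ℝ (fun t => A t i j) x :=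
    fun x i j => (hA x i j).differentiableAt
  -- differentiability of det ∘ A
  have hdet : ∀ x : ℝ, DifferentiableAt ℝ (fun t => (A t).det) x := by
    intro x
    have : (fun t => (A t).det) = fun t =>
        A t 0 0 * A t 1 1 * A t 2 2 - A t 0 0 * A t 1 2 * A t 2 1 -
          A t 0 1 * A t 1 0 * A t 2 2 + A t 0 1 * A t 1 2 * A t 2 0 +
          A t 0 2 * A t 1 0 * A t 2 1 - A t 0 2 * A t 1 1 * A t 2 0 := by
      funext t; exact Matrix.det_fin_three (A t)
    rw [this]
    exact (((((((hAdiff x 0 0).mul (hAdiff x 1 1)).mul (hAdiff x 2 2)).sub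
      (((hAdiff x 0 0).mul (hAdiff x 1 2)).mul (hAdiff x 2 1))).sub
      (((hAdiff x 0 1).mul (hAdiff x 1 0)).mul (hAdiff x 2 2))).add
      (((hAdiff x 0 1).mul (hAdiff x 1 2)).mul (hAdiff x 2 0))).add
      (((hAdiff x 0 2).mul (hAdiff x 1 0)).mul (hAdiff x 2 1))).sub
      (((hAdiff x 0 2).mul (hAdiff x 1 1)).mul (hAdiff x 2 0))
  -- differentiability of adjugate entries
  have hadj : ∀ (x : ℝ) (i j : Fin 3),
      DifferentiableAt ℝ (fun t => (A t).adjugate i j) x := by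
    intro x i j
    have : (fun t => (A t).adjugate i j) = fun t =>
        (-1 : ℂ) ^ ((j : ℕ) + (i : ℕ)) *
          (A t (j.succAbove 0) (i.succAbove 0) * A t (j.succAbove 1) (i.succAbove 1) -
           A t (j.succAbove 0) (i.succAbove 1) * A t (j.succAbove 1) (i.succAbove 0)) := by
      funext t
      rw [Matrix.adjugate_fin_succ_eq_det_submatrix, Matrix.det_fin_two]
      simp [Matrix.submatrix_apply]
    rw [this]
    exact (((hAdiff x _ _).mul (hAdiff x _ _)).sub
      ((hAdiff x _ _).mul (hAdiff x _ _))).const_mul _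
  -- entry formula for φ
  have hφeq : ∀ (t : ℝ) (i j : Fin 3),
      φ t i j = ((A t).det)⁻¹ * (A t).adjugate i j := by
    intro t i j
    show (A t)⁻¹ i j = _
    rw [Matrix.inv_def, Matrix.smul_apply, Ring.inverse_eq_inv, smul_eq_mul]
  -- differentiability of φ entries
  have hφdiff : ∀ (x : ℝ) (i j : Fin 3), DifferentiableAt ℝ (fun t => φ t i j) x := by
    intro x i j
    have : (fun t => φ t i j) = fun t => ((A t).det)⁻¹ * (A t).adjugate i j := by
      funext t; exact hφeq t i j
    rw [this]
    exact ((hdet x).inv (hAdet x).ne_zero).mul (hadj x i j)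
  set φ' : ℝ → Matrix (Fin 3) (Fin 3) ℂ :=
    fun x => Matrix.of fun i j => deriv (fun t => φ t i j) x with hφ'def
  have hφ' : ∀ (x : ℝ) (i j : Fin 3), HasDerivAt (fun t => φ t i j) (φ' x i j) x :=
    fun x i j => (hφdiff x i j).hasDerivAt
  -- product rule: φ' * A + φ * A' = 0
  have hprod : ∀ x : ℝ, φ' x * A x + φ x * A' x = 0 := by
    intro x
    ext i j
    have h1 : HasDerivAt (fun t => (φ t * A t) i j)
        (∑ k, (φ' x i k * A x k j + φ x i k * A' x k j)) x := by
      have : (fun t => (φ t * A t) i j) = fun t => ∑ k, φ t i k * A t k j := by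
        funext t; rw [Matrix.mul_apply]
      rw [this]
      exact HasDerivAt.fun_sum fun k _ => (hφ' x i k).mul (hA x k j)
    have h2 : (fun t => (φ t * A t) i j) = fun _ => (1 : Matrix (Fin 3) (Fin 3) ℂ) i j := by
      funext t; rw [hφA t]
    have h3 : HasDerivAt (fun t => (φ t * A t) i j) 0 x := by
      rw [h2]; exact hasDerivAt_const _ _
    have h4 := h1.unique h3
    rw [Matrix.add_apply, Matrix.mul_apply, Matrix.mul_apply, Matrix.zero_apply,
      ← Finset.sum_add_distrib]
    exact h4
  -- hence φ' = -(φ * A' * φ)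
  have hφ'eq : ∀ x : ℝ, φ' x = -(φ x * A' x * φ x) := by
    intro x
    have h1 : φ' x * A x = -(φ x * A' x) := by
      have := hprod x
      rw [add_eq_zero_iff_eq_neg] at this
      exact this
    have h2 := congrArg (fun M => M * φ x) h1
    rw [mul_assoc (φ' x) (A x) (φ x), hAφ x, mul_one, neg_mul] at h2
    exact h2
  -- key identity for A'
  have hA'id : ∀ x : ℝ, A' x = (Complex.I * lam) • (A x * S x) := by
    intro x
    have h0 := heq c x
    have h1 : ψx x c = (-(Complex.I) * c) • (S x * ψ x c) := by
      have := congrArg (fun M => (-(Complex.I)) • M) h0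
      simp only [smul_smul] at this
      rw [show -Complex.I * Complex.I = 1 by
        rw [neg_mul, Complex.I_mul_I, neg_neg], one_smul] at this
      rw [this]
    have h2 : (ψx x c)ᴴ = (Complex.I * lam) • ((ψ x c)ᴴ * (S x)ᴴ) := by
      rw [h1, Matrix.conjTranspose_smul, Matrix.conjTranspose_mul]
      congr 1
      simp [hc]
    have hQ2' : ∀ X : Matrix (Fin 3) (Fin 3) ℂ, Qε * (Qε * X) = X := by
      intro X; rw [← mul_assoc, hQ2, one_mul]
    have hmul : ∀ M N : Matrix (Fin 3) (Fin 3) ℂ,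
        (Qε * M * Qε) * (Qε * N * Qε) = Qε * (M * N) * Qε := by
      intro M N
      simp only [mul_assoc, hQ2']
    have hSQ : Qε * (S x)ᴴ * Qε = S x := hS x
    show Qε * (ψx x c)ᴴ * Qε = _
    rw [h2, Matrix.mul_smul, Matrix.smul_mul]
    congr 1
    rw [← hmul (ψ x c)ᴴ (S x)ᴴ, hSQ]
  refine ⟨φ', hφ', ?_⟩
  intro x
  rw [hφ'eq x, hA'id x]
  have hfin : φ x * ((Complex.I * lam) • (A x * S x)) * φ x
      = (Complex.I * lam) • (S x * φ x) := by
    rw [Matrix.mul_smul, Matrix.smul_mul]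
    congr 1
    rw [← mul_assoc (φ x) (A x) (S x), hφA x, one_mul]
  rw [hfin, smul_neg, smul_smul]
  rw [show Complex.I * (Complex.I * lam) = -lam by
    rw [← mul_assoc, Complex.I_mul_I, neg_mul, one_mul]]
  rw [neg_smul, neg_neg]
end
end

section
/- Let V be a complex vector space, Λ and h linear operators on V with h ∘ h = id and Λ ∘ h = −h ∘ Λ, λ₀ ∈ ℂ with λ₀ ≠ 0, and A, B ∈ V with ΛA = λ₀·A, ΛB = λ₀·B + A. For s ∈ {0,1} set A^[s] = (1/2)(A + (−1)^s·h(A)), B^[s] = (1/2)(B + (−1)^s·h(B)), and V^[s] = span{A^[s], B^[s]}. Then: (i) if A^[s] ≠ 0, then A^[s] and B^[s] are linearly independent, V^[s] is two-dimensional, invariant under Λ², and the matrix of Λ² in the basis (2λ₀·A^[s], B^[s]) is the 2×2 Jordan block with λ₀² on the diagonal; (ii) if A^[s] = 0 and B^[s] ≠ 0, then V^[s] is one-dimensional and Λ²(B^[s]) = λ₀²·B^[s]; (iii) if A^[s] = B^[s] = 0 then V^[s] = 0. In all cases V^[s] is invariant under Λ² (though in case (i) with A^[s] ≠ 0 it need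 not be invariant under Λ). -/
noncomputable section


private lemma li_helper {V : Type*} [AddCommGroup V] [Module ℂ V]
    (Λ : V →ₗ[ℂ] V) (lam₀ : ℂ) (hlam₀ : lam₀ ≠ 0) (a b : V)
    (k1 : Λ (Λ a) = (lam₀ ^ 2) • a)
    (k2 : Λ (Λ b) = (lam₀ ^ 2) • b + (2 * lam₀) • a)
    (ha : a ≠ 0) : LinearIndependent ℂ ![a, b] := by
  rw [LinearIndependent.pair_iff]
  intro c d hcd
  have h2 : Λ (Λ (c • a + d • b)) = 0 := by rw [hcd]; simp
  rw [map_add, map_add, map_smul, map_smul, map_smul, map_smul, k1, k2] at h2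
  have h3 : (lam₀ ^ 2) • (c • a + d • b) + (d * (2 * lam₀)) • a = 0 := by
    rw [← h2]; module
  rw [hcd, smul_zero, zero_add] at h3
  have hd : d = 0 := by
    rcases smul_eq_zero.mp h3 with hh | hh
    · rcases mul_eq_zero.mp hh with h' | h'
      · exact h'
      · exact absurd h' (by simp [hlam₀])
    · exact absurd hh ha
  subst hd
  simp only [zero_smul, add_zero] at hcd
  rcases smul_eq_zero.mp hcd with hh | hh
  · exact ⟨hh, rfl⟩
  · exact absurd hh ha

theorem Lambda_sq_invariant_subspaces_discrete_spectrum
    (V : Type*) [AddCommGroup V] [Module ℂ V]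
    (Λ h : V →ₗ[ℂ] V)
    (hinv : h ∘ₗ h = LinearMap.id)
    (hanti : Λ ∘ₗ h = -(h ∘ₗ Λ))
    (lam₀ : ℂ) (hlam₀ : lam₀ ≠ 0) (A B : V)
    (hA : Λ A = lam₀ • A) (hB : Λ B = lam₀ • B + A) :
    let As : ℕ → V := fun s => (2⁻¹ : ℂ) • (A + ((-1 : ℂ) ^ s) • h A)
    let Bs : ℕ → V := fun s => (2⁻¹ : ℂ) • (B + ((-1 : ℂ) ^ s) • h B)
    let Vs : ℕ → Submodule ℂ V := fun s => Submodule.span ℂ {As s, Bs s}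
    ∀ s : ℕ,
      -- (i) if A^[s] ≠ 0
      (As s ≠ 0 →
        LinearIndependent ℂ ![As s, Bs s] ∧
        Module.finrank ℂ (Vs s) = 2 ∧
        (∀ v ∈ Vs s, Λ (Λ v) ∈ Vs s) ∧
        -- matrix of Λ² in the basis (2λ₀·A^[s], B^[s]) is the Jordan block with λ₀²
        Λ (Λ ((2 * lam₀) • As s)) = (lam₀ ^ 2) • ((2 * lam₀) • As s) + (0 : ℂ) • Bs s ∧
        Λ (Λ (Bs s)) = (1 : ℂ) • ((2 * lam₀) • As s) + (lam₀ ^ 2) • Bs s) ∧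
      -- (ii) if A^[s] = 0 and B^[s] ≠ 0
      (As s = 0 → Bs s ≠ 0 →
        Module.finrank ℂ (Vs s) = 1 ∧ Λ (Λ (Bs s)) = (lam₀ ^ 2) • Bs s) ∧
      -- (iii) if A^[s] = B^[s] = 0
      (As s = 0 → Bs s = 0 → Vs s = ⊥) ∧
      -- in all cases V^[s] is invariant under Λ²
      (∀ v ∈ Vs s, Λ (Λ v) ∈ Vs s) := by
  intro As Bs Vs s
  have hΛh : ∀ x : V, Λ (h x) = - h (Λ x) := fun x => by
    have := congrArg (fun f : V →ₗ[ℂ] V => f x) hanti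
    simpa using this
  have key1 : Λ (Λ (As s)) = (lam₀ ^ 2) • As s := by
    simp only [As, map_smul, map_add, hA, hΛh, map_neg, map_smul, hA]
    module
  have key2 : Λ (Λ (Bs s)) = (lam₀ ^ 2) • Bs s + (2 * lam₀) • As s := by
    simp only [As, Bs, map_smul, map_add, hA, hB, hΛh, map_neg, map_smul]
    module
  have memA : As s ∈ Vs s := Submodule.subset_span (by left; rfl)
  have memB : Bs s ∈ Vs s := Submodule.subset_span (by right; rfl)
  have inv : ∀ v ∈ Vs s, Λ (Λ v) ∈ Vs s := by
    intro v hv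
    induction hv using Submodule.span_induction with
    | mem x hx =>
      rcases hx with h1 | h1
      · rw [h1, key1]; exact (Vs s).smul_mem _ memA
      · rw [h1, key2]; exact (Vs s).add_mem ((Vs s).smul_mem _ memB) ((Vs s).smul_mem _ memA)
    | zero => simp
    | add x y _ _ hx hy => rw [map_add, map_add]; exact (Vs s).add_mem hx hy
    | smul c x _ hx => rw [map_smul, map_smul]; exact (Vs s).smul_mem _ hx
  refine ⟨?_, ?_, ?_, inv⟩
  · intro hAne
    have hli : LinearIndependent ℂ ![As s, Bs s] :=
      li_helper Λ lam₀ hlam₀ _ _ key1 key2 hAne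
    refine ⟨hli, ?_, inv, ?_, ?_⟩
    · have hr : Set.range ![As s, Bs s] = {As s, Bs s} := by
        ext x; simp [Matrix.range_cons, Matrix.range_empty, or_comm]
      have h2 := finrank_span_eq_card hli
      rw [hr] at h2
      simpa using h2
    · rw [map_smul, map_smul, key1]; module
    · rw [key2]; module
  · refine fun hA0 hBne => ⟨?_, ?_⟩
    · have : Vs s = Submodule.span ℂ {Bs s} := by
        show Submodule.span ℂ {As s, Bs s} = _
        rw [hA0]
        rw [Submodule.span_insert_eq_span]
        simp
      rw [this, finrank_span_singleton hBne]
    · rw [key2, hA0, smul_zero, add_zero]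
  · intro hA0 hB0
    show Submodule.span ℂ {As s, Bs s} = ⊥
    rw [hA0, hB0]
    simp
end
end
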